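/- Let k be a field of characteristic 0 and let R be a commutative Noetherian ring of Krull dimension 1 equipped with an ℕ-grading 𝒜 making R a graded k-algebra with R_0 = k (i.e. 𝒜 0 = k·1). Then R is nearly regular, i.e. the graded maximal ideal m_R of R is contained in the trace ideal tr_R(Ω^1_{R/k}) of the first exterior power of the module of Kähler differentials. -/

import Mathlib

open scoped TensorProduct

/-- The trace ideal of an `R`-module `M`: the sum (supremum) of the ranges of all
`R`-linear maps `M → R`. -/
def traceIdeal (R : Type*) [CommRing R] (M : Type*) [AddCommGroup M] [Module R M] : Ideal R :=
  ⨆ f : M →ₗ[R] R, LinearMap.range f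

/-- The graded maximal (irrelevant) ideal of an `ℕ`-graded algebra: the ideal generated by
all homogeneous elements of positive degree. -/
def irrelevantIdeal {k R : Type*} [CommSemiring k] [CommRing R] [Algebra k R]
    (𝒜 : ℕ → Submodule k R) : Ideal R :=
  Ideal.span {x : R | ∃ n : ℕ, 0 < n ∧ x ∈ 𝒜 n}

section Euler

variable {k R : Type*} [CommRing k] [CommRing R] [Algebra k R]
  (𝒜 : ℕ → Submodule k R) [GradedAlgebra 𝒜]

/-- The Euler linear map: sends a homogeneous element of degree `n` to `n • x`. -/
noncomputable def eulerMap : R →ₗ[k] R :=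
  (DirectSum.toModule k ℕ R fun n => (n : ℕ) • (𝒜 n).subtype) ∘ₗ
    (DirectSum.decomposeAlgEquiv 𝒜).toLinearMap

theorem eulerMap_of_mem {n : ℕ} {x : R} (hx : x ∈ 𝒜 n) : eulerMap 𝒜 x = n • x := by
  have h1 : (DirectSum.decomposeAlgEquiv 𝒜).toLinearMap x
      = DirectSum.lof k ℕ (fun i => 𝒜 i) n ⟨x, hx⟩ := by
    simpa [DirectSum.lof_eq_of] using DirectSum.decompose_of_mem 𝒜 hx
  simp only [eulerMap, LinearMap.comp_apply, h1, DirectSum.toModule_lof]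
  rfl

theorem eulerMap_leibniz (a b : R) :
    eulerMap 𝒜 (a * b) = a * eulerMap 𝒜 b + b * eulerMap 𝒜 a := by
  have key : ∀ {m n : ℕ} (a b : R), a ∈ 𝒜 m → b ∈ 𝒜 n →
      eulerMap 𝒜 (a * b) = a * eulerMap 𝒜 b + b * eulerMap 𝒜 a := by
    intro m n a b ha hb
    rw [eulerMap_of_mem 𝒜 ha, eulerMap_of_mem 𝒜 hb,
      eulerMap_of_mem 𝒜 (SetLike.mul_mem_graded ha hb), add_smul,
      mul_smul_comm, mul_smul_comm, mul_comm b a]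
    rw [add_comm]
  induction a using DirectSum.Decomposition.inductionOn 𝒜 with
  | zero => simp
  | homogeneous a' =>
    induction b using DirectSum.Decomposition.inductionOn 𝒜 with
    | zero => simp
    | homogeneous b' => exact key _ _ a'.2 b'.2
    | add b₁ b₂ h₁ h₂ =>
      simp only [mul_add, map_add, h₁, h₂]
      ring
  | add a₁ a₂ h₁ h₂ =>
    simp only [add_mul, map_add, h₁, h₂]
    ring

/-- The Euler derivation of a graded algebra. -/
noncomputable def eulerDerivation : Derivation k R R where
  toLinearMap := eulerMap 𝒜
  map_one_eq_zero' := by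
    have : (1 : R) ∈ 𝒜 0 := SetLike.one_mem_graded 𝒜
    simp [eulerMap_of_mem 𝒜 this]
  leibniz' a b := by
    simpa [smul_eq_mul] using eulerMap_leibniz 𝒜 a b

end Euler

theorem statement14 (k R : Type*) [Field k] [CharZero k]
    [CommRing R] [IsNoetherianRing R] [Algebra k R]
    (𝒜 : ℕ → Submodule k R) [GradedAlgebra 𝒜] (h0 : 𝒜 0 = 1)
    (hd : ringKrullDim R = 1) :
    irrelevantIdeal 𝒜 ≤ traceIdeal R (⋀[R]^1 (Ω[R⁄k])) := by
  rw [irrelevantIdeal, Ideal.span_le]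
  rintro x ⟨n, hn, hx⟩
  -- the linear map from the first exterior power to `R` induced by the Euler derivation
  set f : Ω[R⁄k] →ₗ[R] R := (eulerDerivation 𝒜 (k := k)).liftKaehlerDifferential
  set g : (⋀[R]^1 (Ω[R⁄k])) →ₗ[R] R :=
    f ∘ₗ ExteriorAlgebra.ιInv ∘ₗ (⋀[R]^1 (Ω[R⁄k])).subtype
  have hιmem : ExteriorAlgebra.ι R (KaehlerDifferential.D k R x) ∈ ⋀[R]^1 (Ω[R⁄k]) := by
    have h1 : ⋀[R]^1 (Ω[R⁄k]) = LinearMap.range (ExteriorAlgebra.ι R) := pow_one _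
    rw [h1]
    exact LinearMap.mem_range_self _ _
  have hg : g ⟨_, hιmem⟩ = (n : R) * x := by
    show f (ExteriorAlgebra.ιInv (ExteriorAlgebra.ι R (KaehlerDifferential.D k R x)))
        = (n : R) * x
    rw [ExteriorAlgebra.ι_leftInverse]
    rw [Derivation.liftKaehlerDifferential_comp_D]
    show eulerMap 𝒜 x = (n : R) * x
    rw [eulerMap_of_mem 𝒜 hx, nsmul_eq_mul]
  have hx' : x = g ((algebraMap k R (n : k)⁻¹) • ⟨_, hιmem⟩) := by
    rw [map_smul, hg, smul_eq_mul, ← mul_assoc, ← map_natCast (algebraMap k R) n,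
      ← map_mul, inv_mul_cancel₀ (Nat.cast_ne_zero.mpr hn.ne' : (n : k) ≠ 0), map_one, one_mul]
  have : x ∈ LinearMap.range g := ⟨_, hx'.symm⟩
  exact (le_iSup (fun f : (⋀[R]^1 (Ω[R⁄k])) →ₗ[R] R => LinearMap.range f) g) this
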